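/- Let τ be a stopping time on a filtered probability space with |F_∞| < ∞. With A_τ^t = {A ∈ A(F_t) : A ⊆ {τ = t}} and A_τ = ⋃_{t∈T∪{+∞}} A_τ^t, the collection A_τ is exactly the set of atoms of F_τ: A_τ = A(F_τ). -/

import Mathlib

open Set MeasurableSpace MeasureTheory

/-- `A` is an atom (minimal nonempty element) of the σ-algebra `m`. -/
def IsAtomOf {Ω : Type*} (m : MeasurableSpace Ω) (A : Set Ω) : Prop :=
  MeasurableSet[m] A ∧ A ≠ ∅ ∧
    ∀ F : Set Ω, MeasurableSet[m] F → F ⊆ A → F = ∅ ∨ F = A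

/-- The stopping time σ-algebra `F_τ` as a collection of sets:
`{F ∈ F_∞ : F ∩ {τ ≤ t} ∈ F_t for all t ∈ T}`, where `F_∞ = 𝓕 ⊤`. -/
def stoppedSets {Ω : Type*} (T : Set ℝ) (𝓕 : WithTop ℝ → MeasurableSpace Ω)
    (τ : Ω → WithTop ℝ) : Set (Set Ω) :=
  {F | MeasurableSet[𝓕 ⊤] F ∧
    ∀ t ∈ T, MeasurableSet[𝓕 (t : WithTop ℝ)] (F ∩ {ω | τ ω ≤ (t : WithTop ℝ)})}

lemma mem_stoppedSets_of_coe {Ω : Type*} {T : Set ℝ} {𝓕 : WithTop ℝ → MeasurableSpace Ω}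
    {τ : Ω → WithTop ℝ}
    (hmono : ∀ s ∈ T, ∀ t ∈ T, s ≤ t → 𝓕 s ≤ 𝓕 t)
    (hsub : ∀ t ∈ T, 𝓕 (t : WithTop ℝ) ≤ 𝓕 ⊤)
    {r : ℝ} (hr : r ∈ T) {F : Set Ω} (hF : MeasurableSet[𝓕 (r : WithTop ℝ)] F)
    (hFs : F ⊆ {ω | τ ω = (r : WithTop ℝ)}) : F ∈ stoppedSets T 𝓕 τ := by
  refine ⟨hsub r hr _ hF, fun t ht => ?_⟩
  rcases le_or_gt r t with h | h
  · have heq : F ∩ {ω | τ ω ≤ (t : WithTop ℝ)} = F := by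
      apply inter_eq_left.2
      intro ω hω
      have h2 := hFs hω
      simp only [mem_setOf_eq] at h2 ⊢
      rw [h2]
      exact_mod_cast h
    rw [heq]
    exact hmono r hr t ht h _ hF
  · have heq : F ∩ {ω | τ ω ≤ (t : WithTop ℝ)} = ∅ := by
      ext ω
      simp only [mem_inter_iff, mem_setOf_eq, mem_empty_iff_false, iff_false, not_and]
      intro hω hle
      have h2 := hFs hω
      simp only [mem_setOf_eq] at h2
      rw [h2] at hle
      exact absurd (WithTop.coe_le_coe.1 hle) (not_le.2 h)
    rw [heq]
    exact @MeasurableSet.empty Ω (𝓕 _)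

lemma mem_stoppedSets_of_top {Ω : Type*} {T : Set ℝ} {𝓕 : WithTop ℝ → MeasurableSpace Ω}
    {τ : Ω → WithTop ℝ} {F : Set Ω} (hF : MeasurableSet[𝓕 ⊤] F)
    (hFs : F ⊆ {ω | τ ω = ⊤}) : F ∈ stoppedSets T 𝓕 τ := by
  refine ⟨hF, fun t ht => ?_⟩
  have heq : F ∩ {ω | τ ω ≤ (t : WithTop ℝ)} = ∅ := by
    ext ω
    simp only [mem_inter_iff, mem_setOf_eq, mem_empty_iff_false, iff_false, not_and]
    intro hω hle
    have h2 := hFs hω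
    simp only [mem_setOf_eq] at h2
    rw [h2] at hle
    exact absurd hle (by simp)
  rw [heq]
  exact @MeasurableSet.empty Ω (𝓕 _)

/-- for finite F_infinity, A_tau is exactly the set of atoms of F_tau. -/
theorem Atau_eq_atoms_stoppedSets {Ω : Type*} (T : Set ℝ)
    (𝓕 : WithTop ℝ → MeasurableSpace Ω) (τ : Ω → WithTop ℝ)
    (hmono : ∀ s ∈ T, ∀ t ∈ T, s ≤ t → 𝓕 s ≤ 𝓕 t)
    (hsub : ∀ t ∈ T, 𝓕 (t : WithTop ℝ) ≤ 𝓕 ⊤)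
    (hfin : {S : Set Ω | MeasurableSet[𝓕 ⊤] S}.Finite)
    (hrange : ∀ ω, τ ω = ⊤ ∨ ∃ t ∈ T, τ ω = (t : WithTop ℝ))
    (hstop : ∀ t ∈ T, MeasurableSet[𝓕 (t : WithTop ℝ)] {ω | τ ω ≤ (t : WithTop ℝ)}) :
    {A : Set Ω | ∃ s : WithTop ℝ, (s = ⊤ ∨ ∃ r ∈ T, s = (r : WithTop ℝ)) ∧
        IsAtomOf (𝓕 s) A ∧ A ⊆ {ω | τ ω = s}} =
    {A : Set Ω | A ∈ stoppedSets T 𝓕 τ ∧ A ≠ ∅ ∧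
        ∀ F ∈ stoppedSets T 𝓕 τ, F ⊆ A → F = ∅ ∨ F = A} := by
  ext A
  simp only [mem_setOf_eq]
  constructor
  · rintro ⟨s, hs, ⟨hAmeas, hAne, hAmin⟩, hAsub⟩
    rcases hs with rfl | ⟨r, hrT, rfl⟩
    · refine ⟨mem_stoppedSets_of_top hAmeas hAsub, hAne, fun F hF hFA => ?_⟩
      exact hAmin F hF.1 hFA
    · refine ⟨mem_stoppedSets_of_coe hmono hsub hrT hAmeas hAsub, hAne, fun F hF hFA => ?_⟩
      have hFmeas : MeasurableSet[𝓕 (r : WithTop ℝ)] F := by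
        have heq : F ∩ {ω | τ ω ≤ (r : WithTop ℝ)} = F := by
          apply inter_eq_left.2
          intro ω hω
          have h2 := hAsub (hFA hω)
          simp only [mem_setOf_eq] at h2 ⊢
          rw [h2]
        have := hF.2 r hrT
        rwa [heq] at this
      exact hAmin F hFmeas hFA
  · rintro ⟨⟨hAmeas, hAint⟩, hAne, hAmin⟩
    obtain ⟨ω₀, hω₀⟩ := nonempty_iff_ne_empty.2 hAne
    -- A ∩ {τ ≤ t} is either ∅ or A
    have hkey : ∀ t ∈ T, A ∩ {ω | τ ω ≤ (t : WithTop ℝ)} = ∅ ∨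
        A ∩ {ω | τ ω ≤ (t : WithTop ℝ)} = A := by
      intro t ht
      refine hAmin _ ⟨hAmeas.inter (hsub t ht _ (hstop t ht)), fun t' ht' => ?_⟩
        inter_subset_left
      rcases le_total t t' with h | h
      · have heq : (A ∩ {ω | τ ω ≤ (t : WithTop ℝ)}) ∩ {ω | τ ω ≤ (t' : WithTop ℝ)} =
            A ∩ {ω | τ ω ≤ (t : WithTop ℝ)} := by
          apply inter_eq_left.2
          rintro ω ⟨_, hω⟩
          simp only [mem_setOf_eq] at hω ⊢
          exact hω.trans (by exact_mod_cast h)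
        rw [heq]
        exact hmono t ht t' ht' h _ (hAint t ht)
      · have heq : (A ∩ {ω | τ ω ≤ (t : WithTop ℝ)}) ∩ {ω | τ ω ≤ (t' : WithTop ℝ)} =
            A ∩ {ω | τ ω ≤ (t' : WithTop ℝ)} := by
          ext ω
          simp only [mem_inter_iff, mem_setOf_eq]
          constructor
          · rintro ⟨⟨h1, _⟩, h3⟩; exact ⟨h1, h3⟩
          · rintro ⟨h1, h3⟩; exact ⟨⟨h1, h3.trans (by exact_mod_cast h)⟩, h3⟩
        rw [heq]
        exact hAint t' ht'
    -- τ ≤ t is constant on A for t ∈ T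
    have hiff : ∀ t ∈ T, ∀ ω ∈ A, ∀ ω' ∈ A, τ ω ≤ (t : WithTop ℝ) → τ ω' ≤ (t : WithTop ℝ) := by
      intro t ht ω hω ω' hω' hle
      rcases hkey t ht with h | h
      · rw [eq_empty_iff_forall_notMem] at h
        exact absurd (mem_inter hω hle) (h ω)
      · have hmem : ω' ∈ A ∩ {ω | τ ω ≤ (t : WithTop ℝ)} := by rw [h]; exact hω'
        exact hmem.2
    -- τ is constant on A
    have hconst : ∀ ω ∈ A, τ ω = τ ω₀ := by
      intro ω hω
      rcases hrange ω with h1 | ⟨t, ht, h1⟩ <;> rcases hrange ω₀ with h2 | ⟨t₀, ht₀, h2⟩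
      · rw [h1, h2]
      · exfalso
        have := hiff t₀ ht₀ ω₀ hω₀ ω hω (le_of_eq h2)
        rw [h1] at this
        exact absurd this (by simp)
      · exfalso
        have := hiff t ht ω hω ω₀ hω₀ (le_of_eq h1)
        rw [h2] at this
        exact absurd this (by simp)
      · rw [h1, h2]
        have hle1 := hiff t ht ω hω ω₀ hω₀ (le_of_eq h1)
        have hle2 := hiff t₀ ht₀ ω₀ hω₀ ω hω (le_of_eq h2)
        rw [h2] at hle1; rw [h1] at hle2
        exact_mod_cast le_antisymm (WithTop.coe_le_coe.1 hle2) (WithTop.coe_le_coe.1 hle1)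
    have hAsub : A ⊆ {ω | τ ω = τ ω₀} := fun ω hω => hconst ω hω
    refine ⟨τ ω₀, hrange ω₀, ?_, hAsub⟩
    rcases hrange ω₀ with h | ⟨r, hrT, h⟩
    · rw [h] at hAsub ⊢
      refine ⟨hAmeas, hAne, fun F hF hFA => ?_⟩
      exact hAmin F (mem_stoppedSets_of_top hF (hFA.trans hAsub)) hFA
    · rw [h] at hAsub ⊢
      have hAr : MeasurableSet[𝓕 (r : WithTop ℝ)] A := by
        have heq : A ∩ {ω | τ ω ≤ (r : WithTop ℝ)} = A := by
          apply inter_eq_left.2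
          intro ω hω
          have h2 := hAsub hω
          simp only [mem_setOf_eq] at h2 ⊢
          rw [h2]
        have := hAint r hrT
        rwa [heq] at this
      refine ⟨hAr, hAne, fun F hF hFA => ?_⟩
      exact hAmin F (mem_stoppedSets_of_coe hmono hsub hrT hF (hFA.trans hAsub)) hFA
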